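/- Let B, C be base hierarchies with C a good successor of B. Then for all n: (1) n ∈ B if and only if ↑_B^C(n) ∈ C; (2) n is B-critical (i.e. base_B(n) divides n) if and only if ↑_B^C(n) is C-critical. -/

import Mathlib

/-- `n =_b b^e·a + r` is the `b`-decomposition of `n`. -/
def BDecomp (b n e a r : ℕ) : Prop :=
  n = b ^ e * a + r ∧ b ^ e ≤ n ∧ n < b ^ (e + 1) ∧ 0 < a ∧ a < b ∧ r < b ^ e

/-- `c = S_B(b)`, the successor of `b` in `B` (when it exists). -/
def SuccIn (B : Set ℕ) (b c : ℕ) : Prop := IsLeast {x | x ∈ B ∧ b < x} c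

/-- A base hierarchy: a nonempty set of naturals `≥ 2` in which every element
divides its successor (`b ∣ S_B(b)`; vacuous when `S_B(b) = ∞`). -/
def IsBaseHierarchy (B : Set ℕ) : Prop :=
  B.Nonempty ∧ (∀ b ∈ B, 2 ≤ b) ∧ ∀ b ∈ B, ∀ c, SuccIn B b c → b ∣ c

/-- `b = base_B(n)`: the largest element of `B` that is `≤ n`, or `min B` if
`n < min B`. -/
def IsBaseOf (B : Set ℕ) (n b : ℕ) : Prop :=
  ((∃ x ∈ B, x ≤ n) ∧ IsGreatest {x | x ∈ B ∧ x ≤ n} b) ∨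
  ((∀ x ∈ B, n < x) ∧ IsLeast B b)

/-- `n` is `B`-critical if `base_B(n) ∣ n`. -/
def Critical (B : Set ℕ) (n : ℕ) : Prop := ∃ b, IsBaseOf B n b ∧ b ∣ n

lemma exists_bdecomp {b n : ℕ} (hb : 2 ≤ b) (hn : b ≤ n) :
    ∃ e a r, 1 ≤ e ∧ BDecomp b n e a r := by
  have hb1 : 1 < b := hb
  have hn0 : 0 < n := by omega
  set e := Nat.log b n with he
  have hp : 0 < b ^ e := Nat.pow_pos (by omega)
  have h1 : b ^ e ≤ n := Nat.pow_log_le_self b (by omega)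
  have h2 : n < b ^ (e + 1) := Nat.lt_pow_succ_log_self hb1 n
  refine ⟨e, n / b ^ e, n % b ^ e, ?_, ?_, h1, h2, ?_, ?_, ?_⟩
  · have := Nat.log_pos hb1 hn
    omega
  · exact (Nat.div_add_mod n (b ^ e)).symm
  · exact Nat.div_pos h1 hp
  · rw [Nat.div_lt_iff_lt_mul hp]
    calc n < b ^ (e + 1) := h2
    _ = b * b ^ e := by ring
  · exact Nat.mod_lt _ hp

lemma nat_isLeast {S : Set ℕ} (h : S.Nonempty) : IsLeast S (sInf S) :=
  ⟨Nat.sInf_mem h, fun _ hx => Nat.sInf_le hx⟩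

lemma nat_isGreatest {S : Set ℕ} (h : S.Nonempty) (hb : BddAbove S) :
    IsGreatest S (sSup S) :=
  ⟨Nat.sSup_mem h hb, fun _ hx => le_csSup hb hx⟩

section fixed
variable (up : ℕ → ℕ) (g : ℕ → ℕ) (b c : ℕ)
  (hb : 2 ≤ b) (hc : 2 ≤ c)
  (hge : ∀ m, m ≤ up m)
  (hgs : ∀ m, m < b → g m = up m)
  (hgb : ∀ m e a r, b ≤ m → BDecomp b m e a r → g m = c ^ g e * up a + g r)

include hb hc hge hgs hgb in
lemma chg_pos : ∀ m, 1 ≤ m → 1 ≤ g m := by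
  intro m hm
  rcases lt_or_ge m b with h | h
  · rw [hgs m h]; exact le_trans hm (hge m)
  · obtain ⟨e, a, r, he, hd⟩ := exists_bdecomp hb h
    rw [hgb m e a r h hd]
    have h1 : 0 < c ^ g e := Nat.pow_pos (by omega)
    have h2 : 0 < up a := lt_of_lt_of_le hd.2.2.2.1 (hge a)
    have := Nat.mul_pos h1 h2
    omega

include hb hc hge hgs hgb in
lemma chg_ge_c : ∀ m, b ≤ m → c ≤ g m := by
  intro m h
  obtain ⟨e, a, r, he, hd⟩ := exists_bdecomp hb h
  rw [hgb m e a r h hd]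
  have h1 : 1 ≤ g e := chg_pos up g b c hb hc hge hgs hgb e he
  have h2 : c ≤ c ^ g e := Nat.le_self_pow (by omega) c
  have h3 : 0 < up a := lt_of_lt_of_le hd.2.2.2.1 (hge a)
  have := Nat.le_mul_of_pos_right (c ^ g e) h3
  omega

include hb hc hge hgs hgb in
lemma chg_dvd (hup0 : up 0 = 0) (hlt : ∀ k, 0 < k → k < b → up k < c) :
    ∀ m, (b ∣ m ↔ c ∣ g m) := by
  intro m
  induction m using Nat.strong_induction_on with
  | _ m ih =>
    rcases lt_or_ge m b with h | h
    · rw [hgs m h]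
      rcases Nat.eq_zero_or_pos m with rfl | hm
      · simp [hup0]
      · constructor
        · intro hd; exact absurd (Nat.le_of_dvd hm hd) (by omega)
        · intro hd
          have h1 : 0 < up m := lt_of_lt_of_le hm (hge m)
          have h2 := hlt m hm h
          exact absurd (Nat.le_of_dvd h1 hd) (by omega)
    · obtain ⟨e, a, r, he, hd⟩ := exists_bdecomp hb h
      obtain ⟨heq, hle, hl2, ha, hab, hr⟩ := hd
      rw [hgb m e a r h ⟨heq, hle, hl2, ha, hab, hr⟩]
      have hbm : b ∣ b ^ e * a := Dvd.dvd.mul_right (dvd_pow_self b (by omega)) a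
      have hge1 : 1 ≤ g e := chg_pos up g b c hb hc hge hgs hgb e he
      have hcm : c ∣ c ^ g e * up a := Dvd.dvd.mul_right (dvd_pow_self c (by omega)) _
      have h1 : b ∣ m ↔ b ∣ r := by rw [heq]; exact Nat.dvd_add_right hbm
      have h2 : c ∣ c ^ g e * up a + g r ↔ c ∣ g r := Nat.dvd_add_right hcm
      rw [h1, h2]
      exact ih r (by omega)
end fixed

/-- if `C` is a good successor of `B`, then for all `n`:
`n ∈ B ↔ ↑n ∈ C`, and `n` is `B`-critical iff `↑n` is `C`-critical. -/
theorem stmt12 (B C : Set ℕ) (hB : IsBaseHierarchy B) (hC : IsBaseHierarchy C)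
    (up : ℕ → ℕ) (chg : ℕ → ℕ → ℕ → ℕ)
    (hup_small : ∀ n, (∀ x ∈ B, n < x) → up n = n)
    (hchg_small : ∀ b c m, m < b → chg b c m = up m)
    (hchg_big : ∀ b c m e a r, b ≤ m → BDecomp b m e a r →
      chg b c m = c ^ chg b c e * up a + chg b c r)
    (hup_big : ∀ n b, (∃ x ∈ B, x ≤ n) → IsBaseOf B n b →
      ∃ c, IsLeast {c' | c' ∈ C ∧ up (n - 1) < chg b c' n ∧
          ∀ d, SuccIn C c' d → chg b c' n < d} c ∧ up n = chg b c n)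
    (hmin : ∀ mB mC, IsLeast B mB → IsLeast C mC → mB ≤ mC)
    (hgood : ∀ b ∈ B, (∀ mB, IsLeast B mB → mB < b) →
      ∀ e d k, IsBaseOf C (up (b - 1)) e → SuccIn C (up (b - 1)) d →
        up (b - 1) < k → k < d → ¬ e ∣ k)
    :
    ∀ n : ℕ, (n ∈ B ↔ up n ∈ C) ∧ (Critical B n ↔ Critical C (up n)) := by
  obtain ⟨hBne, hB2, -⟩ := hB
  obtain ⟨hCne, hC2, -⟩ := hC
  have hup0 : up 0 = 0 := hup_small 0 (fun x hx => by have := hB2 x hx; omega)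
  have hup1 : up 1 = 1 := hup_small 1 (fun x hx => by have := hB2 x hx; omega)
  have hbase : ∀ n, (∃ x ∈ B, x ≤ n) →
      IsGreatest {x | x ∈ B ∧ x ≤ n} (sSup {x | x ∈ B ∧ x ≤ n}) := by
    intro n hex
    obtain ⟨x, hx, hxn⟩ := hex
    exact nat_isGreatest ⟨x, hx, hxn⟩ ⟨n, fun y hy => hy.2⟩
  have hstep : ∀ m, up m < up (m + 1) := by
    intro m
    by_cases hcase : ∀ x ∈ B, m + 1 < x
    · rw [hup_small (m+1) hcase, hup_small m (fun x hx => by have := hcase x hx; omega)]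
      omega
    · push_neg at hcase
      obtain ⟨x, hxB, hxle⟩ := hcase
      have hex : ∃ y ∈ B, y ≤ m + 1 := ⟨x, hxB, hxle⟩
      have hg := hbase (m+1) hex
      obtain ⟨c, ⟨⟨hcC, hlt, hsuc⟩, -⟩, hupeq⟩ := hup_big (m+1) _ hex (Or.inl ⟨hex, hg⟩)
      rw [← hupeq] at hlt
      simpa using hlt
  have hsm : StrictMono up := strictMono_nat_of_lt_succ hstep
  have hge : ∀ m, m ≤ up m := by
    intro m
    induction m with
    | zero => omega
    | succ k ih => have := hstep k; omega
  have hcompute : ∀ b c', 2 ≤ b → chg b c' b = c' := by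
    intro b c' hb2
    have hdec : BDecomp b b 1 1 0 := by
      refine ⟨by simp, by simp, ?_, one_pos, hb2, by simpa using (by positivity : 0 < b ^ 1)⟩
      have h1 : 2 * b ≤ b * b := Nat.mul_le_mul hb2 le_rfl
      have h2 : b ^ (1 + 1) = b * b := by ring
      omega
    rw [hchg_big b c' b 1 1 0 le_rfl hdec, hchg_small b c' 1 (by omega),
      hchg_small b c' 0 (by omega), hup0, hup1]
    ring
  intro n
  by_cases hA : ∀ x ∈ B, n < x
  · have hupn : up n = n := hup_small n hA
    have hmBl : IsLeast B (sInf B) := nat_isLeast hBne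
    have hmCl : IsLeast C (sInf C) := nat_isLeast hCne
    have hBC := hmin _ _ hmBl hmCl
    have hnB : n < sInf B := hA _ hmBl.1
    have hAC : ∀ x ∈ C, n < x := fun x hx => lt_of_lt_of_le hnB (le_trans hBC (hmCl.2 hx))
    rw [hupn]
    constructor
    · constructor
      · intro h; exact absurd (hA n h) (lt_irrefl n)
      · intro h; exact absurd (hAC n h) (lt_irrefl n)
    · constructor
      · rintro ⟨b', hb', hd⟩
        rcases hb' with ⟨⟨x, hx, hxn⟩, -⟩ | ⟨-, hl⟩
        · have := hA x hx; omega
        · have hb'eq : b' = sInf B := hl.unique hmBl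
          have hn0 : n = 0 := by
            rcases Nat.eq_zero_or_pos n with h0 | h0
            · exact h0
            · have := Nat.le_of_dvd h0 hd; omega
          exact ⟨sInf C, Or.inr ⟨hAC, hmCl⟩, by simp [hn0]⟩
      · rintro ⟨c', hc', hd⟩
        rcases hc' with ⟨⟨x, hx, hxn⟩, -⟩ | ⟨-, hl⟩
        · have := hAC x hx; omega
        · have hnC : n < c' := hAC _ hl.1
          have hn0 : n = 0 := by
            rcases Nat.eq_zero_or_pos n with h0 | h0
            · exact h0
            · have := Nat.le_of_dvd h0 hd; omega
          exact ⟨sInf B, Or.inr ⟨hA, hmBl⟩, by simp [hn0]⟩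
  · push_neg at hA
    obtain ⟨x0, hx0B, hx0n⟩ := hA
    have hex : ∃ y ∈ B, y ≤ n := ⟨x0, hx0B, hx0n⟩
    have hgr : IsGreatest {x | x ∈ B ∧ x ≤ n} (sSup {x | x ∈ B ∧ x ≤ n}) := hbase n hex
    set b := sSup {x | x ∈ B ∧ x ≤ n} with hbdef
    obtain ⟨hbB, hble⟩ := hgr.1
    have hb2 : 2 ≤ b := hB2 b hbB
    have hbase_n : IsBaseOf B n b := Or.inl ⟨hex, hgr⟩
    obtain ⟨c, ⟨⟨hcC, hlt1, hsuc⟩, -⟩, hupn⟩ := hup_big n b hex hbase_n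
    have hc2 : 2 ≤ c := hC2 c hcC
    have hexb : ∃ y ∈ B, y ≤ b := ⟨b, hbB, le_rfl⟩
    have hbaseb : IsBaseOf B b b := Or.inl ⟨hexb, ⟨⟨hbB, le_rfl⟩, fun y hy => hy.2⟩⟩
    obtain ⟨c', ⟨⟨hc'C, hc'lt, -⟩, -⟩, hupb⟩ := hup_big b b hexb hbaseb
    rw [hcompute b c' hb2] at hupb hc'lt
    have hgs : ∀ m, m < b → chg b c m = up m := fun m hm => hchg_small b c m hm
    have hgb : ∀ m e a r, b ≤ m → BDecomp b m e a r →
        chg b c m = c ^ chg b c e * up a + chg b c r :=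
      fun m e a r h hd => hchg_big b c m e a r h hd
    have hcle : c ≤ up n := by
      rw [hupn]
      exact chg_ge_c up (chg b c) b c hb2 hc2 hge hgs hgb n hble
    have hsuc' : ∀ d, SuccIn C c d → up n < d := by
      intro d hd; rw [hupn]; exact hsuc d hd
    have hub_le_c : up b ≤ c := by
      by_contra hcon
      push_neg at hcon
      have hmem : up b ∈ {x | x ∈ C ∧ c < x} := ⟨hupb ▸ hc'C, hcon⟩
      have hdl : SuccIn C c (sInf {x | x ∈ C ∧ c < x}) := nat_isLeast ⟨up b, hmem⟩
      have h1 := hsuc' _ hdl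
      have h2 : sInf {x | x ∈ C ∧ c < x} ≤ up b := Nat.sInf_le hmem
      have h3 : up b ≤ up n := hsm.monotone hble
      omega
    have hlt_small : ∀ k, 0 < k → k < b → up k < c := by
      intro k hk hkb
      have h1 : up k ≤ up (b - 1) := hsm.monotone (by omega)
      omega
    have hgrC : IsGreatest {x | x ∈ C ∧ x ≤ up n} c := by
      refine ⟨⟨hcC, hcle⟩, ?_⟩
      intro y hy
      by_contra hcon
      push_neg at hcon
      have hmem : y ∈ {x | x ∈ C ∧ c < x} := ⟨hy.1, hcon⟩
      have hdl : SuccIn C c (sInf {x | x ∈ C ∧ c < x}) := nat_isLeast ⟨y, hmem⟩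
      have h1 := hsuc' _ hdl
      have h2 : sInf {x | x ∈ C ∧ c < x} ≤ y := Nat.sInf_le hmem
      have h3 : y ≤ up n := hy.2
      omega
    have hbaseC : IsBaseOf C (up n) c := Or.inl ⟨⟨c, hcC, hcle⟩, hgrC⟩
    have hdvd_iff : b ∣ n ↔ c ∣ up n := by
      rw [hupn]
      exact chg_dvd up (chg b c) b c hb2 hc2 hge hgs hgb hup0 hlt_small n
    constructor
    · constructor
      · intro hnB
        have hbn : b = n := le_antisymm hble (hgr.2 ⟨hnB, le_rfl⟩)
        have hcc : chg b c n = c := by rw [← hbn]; exact hcompute b c hb2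
        rw [hupn, hcc]
        exact hcC
      · intro hupC
        have hcge : up n ≤ c := by
          by_contra hcon
          push_neg at hcon
          have hmem : up n ∈ {x | x ∈ C ∧ c < x} := ⟨hupC, hcon⟩
          have hdl : SuccIn C c (sInf {x | x ∈ C ∧ c < x}) := nat_isLeast ⟨up n, hmem⟩
          have h1 := hsuc' _ hdl
          have h2 : sInf {x | x ∈ C ∧ c < x} ≤ up n := Nat.sInf_le hmem
          omega
        have hupc : up n = c := le_antisymm hcge hcle
        obtain ⟨e, a, r, he1, hd⟩ := exists_bdecomp hb2 hble
        obtain ⟨heq, hle, hl2, ha, hab, hr⟩ := hd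
        have hdec : BDecomp b n e a r := ⟨heq, hle, hl2, ha, hab, hr⟩
        have hchgn : c ^ chg b c e * up a + chg b c r = c := by
          rw [← hgb n e a r hble hdec, ← hupn]; exact hupc
        have hge1 : 1 ≤ chg b c e := chg_pos up (chg b c) b c hb2 hc2 hge hgs hgb e he1
        have hua : 1 ≤ up a := le_trans ha (hge a)
        have hpow : c ≤ c ^ chg b c e := Nat.le_self_pow (by omega) c
        have hmul : c ^ chg b c e ≤ c ^ chg b c e * up a :=
          Nat.le_mul_of_pos_right _ hua
        have hr0 : chg b c r = 0 := by omega
        have hmeq : c ^ chg b c e * up a = c := by omega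
        have hrlt : r < b := by
          by_contra hcon
          push_neg at hcon
          have := chg_ge_c up (chg b c) b c hb2 hc2 hge hgs hgb r hcon
          omega
        have hr00 : r = 0 := by
          have h1 := hgs r hrlt
          have h2 := hge r
          omega
        have hee : chg b c e = 1 := by
          by_contra hcon
          have h2 : 2 ≤ chg b c e := by omega
          have hcc : c * c ≤ c ^ chg b c e := by
            calc c * c = c ^ 2 := by ring
            _ ≤ c ^ chg b c e := Nat.pow_le_pow_right (by omega) h2
          have h4 : 2 * c ≤ c * c := Nat.mul_le_mul hc2 le_rfl
          have h5 : 2 * c ≤ c :=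
            le_trans h4 (le_trans hcc (le_trans hmul (le_of_eq hmeq)))
          omega
        rw [hee, pow_one] at hmeq
        have ha1 : up a = 1 :=
          Nat.eq_of_mul_eq_mul_left (show 0 < c by omega) (by rw [mul_one]; exact hmeq)
        have haa : a = 1 := by have := hge a; omega
        have helt : e < b := by
          by_contra hcon
          push_neg at hcon
          have := chg_ge_c up (chg b c) b c hb2 hc2 hge hgs hgb e hcon
          omega
        have hee1 : e = 1 := by
          have h1 := hgs e helt
          have h2 := hge e
          omega
        have hnb : n = b := by rw [heq, hee1, haa, hr00]; ring
        rw [hnb]; exact hbB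
    · have hBcrit : Critical B n ↔ b ∣ n := by
        constructor
        · rintro ⟨b', hb', hd⟩
          rcases hb' with ⟨-, hg'⟩ | ⟨hall, -⟩
          · rwa [hg'.unique hgr] at hd
          · obtain ⟨y, hy, hyn⟩ := hex
            have := hall y hy; omega
        · intro hd; exact ⟨b, hbase_n, hd⟩
      have hCcrit : Critical C (up n) ↔ c ∣ up n := by
        constructor
        · rintro ⟨c'', hc'', hd⟩
          rcases hc'' with ⟨-, hg'⟩ | ⟨hall, -⟩
          · rwa [hg'.unique hgrC] at hd
          · have := hall c hcC; omega
        · intro hd; exact ⟨c, hbaseC, hd⟩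
      rw [hBcrit, hCcrit, hdvd_iff]
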